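/- Let w ∈ ℝⁿ be an eigenvector of PᵀP corresponding to an eigenvalue λ > 1. Then the chord block of w, i.e. the vector (⟨e_α, w⟩)_α ∈ ℝᵏ, is nonzero and is an eigenvector of K with eigenvalue λ, and the cochord block of Pw, i.e. the vector (⟨e_μ, P w⟩)_μ ∈ ℝᵐ, is nonzero and is an eigenvector of *K with the same eigenvalue λ. -/

import Mathlib

open Matrix

/-- Standard basis vector of `ℝⁿ` labeled by a cochord index `μ : Fin m`. -/
def eCo (m k : ℕ) (μ : Fin m) : (Fin m ⊕ Fin k) → ℝ := Pi.single (Sum.inl μ) 1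

/-- Standard basis vector of `ℝⁿ` labeled by a chord index `α : Fin k`. -/
def eCh (m k : ℕ) (α : Fin k) : (Fin m ⊕ Fin k) → ℝ := Pi.single (Sum.inr α) 1

/-- The cycle projection `P = Σ_α c_α e_αᵀ`. -/
def cycProj (m k : ℕ) (ccy : Fin k → (Fin m ⊕ Fin k) → ℝ) :
    Matrix (Fin m ⊕ Fin k) (Fin m ⊕ Fin k) ℝ :=
  ∑ α, vecMulVec (ccy α) (eCh m k α)

/-- The cocycle projection `Q = Σ_μ e_μ c_μᵀ`. -/
def cocProj (m k : ℕ) (cco : Fin m → (Fin m ⊕ Fin k) → ℝ) :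
    Matrix (Fin m ⊕ Fin k) (Fin m ⊕ Fin k) ℝ :=
  ∑ μ, vecMulVec (eCo m k μ) (cco μ)

/-- The cycle Kirchhoff–Symanzik matrix `K_{α,α'} = ⟨c_α, c_{α'}⟩`. -/
def cycKS (m k : ℕ) (ccy : Fin k → (Fin m ⊕ Fin k) → ℝ) : Matrix (Fin k) (Fin k) ℝ :=
  Matrix.of fun α α' => ccy α ⬝ᵥ ccy α'

/-- The cocycle Kirchhoff–Symanzik matrix `(*K)_{μ,μ'} = ⟨c_μ, c_{μ'}⟩`. -/
def cocKS (m k : ℕ) (cco : Fin m → (Fin m ⊕ Fin k) → ℝ) : Matrix (Fin m) (Fin m) ℝ :=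
  Matrix.of fun μ μ' => cco μ ⬝ᵥ cco μ'

/-- The superposition matrix `ω_{μ,α} = ⟨c_μ, e_α⟩`. -/
def supMat (m k : ℕ) (cco : Fin m → (Fin m ⊕ Fin k) → ℝ) : Matrix (Fin m) (Fin k) ℝ :=
  Matrix.of fun μ α => cco μ ⬝ᵥ eCh m k α

/-- If `w` is an eigenvector of `PᵀP` with eigenvalue `λ > 1`, then the chord block of `w`
is a nonzero eigenvector of `K` with eigenvalue `λ`, and the cochord block of `Pw` is a
nonzero eigenvector of `*K` with the same eigenvalue `λ`. -/
theorem statement13 (m k : ℕ)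
    (ccy : Fin k → (Fin m ⊕ Fin k) → ℝ) (cco : Fin m → (Fin m ⊕ Fin k) → ℝ)
    (hch : ∀ α α' : Fin k, eCh m k α ⬝ᵥ ccy α' = if α = α' then 1 else 0)
    (hco : ∀ μ μ' : Fin m, eCo m k μ ⬝ᵥ cco μ' = if μ = μ' then 1 else 0)
    (hcc : ∀ (α : Fin k) (μ : Fin m), ccy α ⬝ᵥ cco μ = 0)
    (l : ℝ) (hl : 1 < l) (w : (Fin m ⊕ Fin k) → ℝ) (hw : w ≠ 0)
    (heig : ((cycProj m k ccy)ᵀ * cycProj m k ccy) *ᵥ w = l • w) :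
    ((fun α => w (Sum.inr α)) ≠ 0 ∧
      cycKS m k ccy *ᵥ (fun α => w (Sum.inr α)) = l • fun α => w (Sum.inr α)) ∧
    ((fun μ => (cycProj m k ccy *ᵥ w) (Sum.inl μ)) ≠ 0 ∧
      cocKS m k cco *ᵥ (fun μ => (cycProj m k ccy *ᵥ w) (Sum.inl μ)) =
        l • fun μ => (cycProj m k ccy *ᵥ w) (Sum.inl μ)) := by
  classical
  set u : Fin k → ℝ := fun α => w (Sum.inr α) with hu
  -- basic dot-product with standard basis
  have hsingle : ∀ (j : Fin m ⊕ Fin k) (v : (Fin m ⊕ Fin k) → ℝ),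
      (Pi.single j (1:ℝ)) ⬝ᵥ v = v j := by
    intro j v; rw [single_dotProduct, one_mul]
  have hccy_inr : ∀ α α' : Fin k, ccy α' (Sum.inr α) = if α = α' then 1 else 0 := by
    intro α α'
    have := hch α α'; rwa [eCh, hsingle] at this
  have hcco_inl : ∀ μ μ' : Fin m, cco μ' (Sum.inl μ) = if μ = μ' then 1 else 0 := by
    intro μ μ'
    have := hco μ μ'; rwa [eCo, hsingle] at this
  set ω : Fin m → Fin k → ℝ := fun μ α => cco μ (Sum.inr α) with hω
  have hccy_inl : ∀ (α : Fin k) (μ : Fin m), ccy α (Sum.inl μ) = -ω μ α := by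
    intro α μ
    have h := hcc α μ
    rw [dotProduct, Fintype.sum_sum_type] at h
    have h1 : ∑ μ', ccy α (Sum.inl μ') * cco μ (Sum.inl μ') = ccy α (Sum.inl μ) := by
      rw [Finset.sum_eq_single μ]
      · rw [hcco_inl, if_pos rfl, mul_one]
      · intro b _ hb; rw [hcco_inl, if_neg hb, mul_zero]
      · simp
    have h2 : ∑ α', ccy α (Sum.inr α') * cco μ (Sum.inr α') = ω μ α := by
      rw [Finset.sum_eq_single α]
      · rw [hccy_inr, if_pos rfl, one_mul]
      · intro b _ hb; rw [hccy_inr, if_neg hb, zero_mul]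
      · simp
    rw [h1, h2] at h
    linarith
  -- the Kirchhoff–Symanzik matrices entrywise
  have hK : ∀ α α' : Fin k, cycKS m k ccy α α'
      = (if α = α' then 1 else 0) + ∑ μ, ω μ α * ω μ α' := by
    intro α α'
    show ccy α ⬝ᵥ ccy α' = _
    rw [dotProduct, Fintype.sum_sum_type]
    have h1 : ∑ μ, ccy α (Sum.inl μ) * ccy α' (Sum.inl μ) = ∑ μ, ω μ α * ω μ α' := by
      refine Finset.sum_congr rfl fun μ _ => ?_
      rw [hccy_inl, hccy_inl]; ring
    have h2 : ∑ β, ccy α (Sum.inr β) * ccy α' (Sum.inr β) = if α = α' then 1 else 0 := by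
      rw [Finset.sum_eq_single α]
      · rw [hccy_inr, if_pos rfl, one_mul, hccy_inr]
      · intro b _ hb; rw [hccy_inr, if_neg hb, zero_mul]
      · simp
    rw [h1, h2]; ring
  have hKS : ∀ μ μ' : Fin m, cocKS m k cco μ μ'
      = (if μ = μ' then 1 else 0) + ∑ α, ω μ α * ω μ' α := by
    intro μ μ'
    show cco μ ⬝ᵥ cco μ' = _
    rw [dotProduct, Fintype.sum_sum_type]
    have h1 : ∑ ν, cco μ (Sum.inl ν) * cco μ' (Sum.inl ν) = if μ = μ' then 1 else 0 := by
      rw [Finset.sum_eq_single μ]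
      · rw [hcco_inl, if_pos rfl, one_mul, hcco_inl]
      · intro b _ hb; rw [hcco_inl, if_neg hb, zero_mul]
      · simp
    rw [h1]
  -- P *ᵥ y componentwise
  have hP : ∀ (y : (Fin m ⊕ Fin k) → ℝ) (i : Fin m ⊕ Fin k),
      (cycProj m k ccy *ᵥ y) i = ∑ α, ccy α i * y (Sum.inr α) := by
    intro y i
    rw [mulVec, dotProduct]
    simp only [cycProj, Matrix.sum_apply, vecMulVec_apply, Finset.sum_mul]
    rw [Finset.sum_comm]
    refine Finset.sum_congr rfl fun α _ => ?_
    have : ∑ j, ccy α i * eCh m k α j * y j = ccy α i * (eCh m k α ⬝ᵥ y) := by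
      rw [dotProduct, Finset.mul_sum]
      exact Finset.sum_congr rfl fun j _ => by ring
    rw [this, eCh, hsingle]
  -- Pᵀ *ᵥ y componentwise
  have hPT : ∀ (y : (Fin m ⊕ Fin k) → ℝ) (i : Fin m ⊕ Fin k),
      ((cycProj m k ccy)ᵀ *ᵥ y) i = ∑ α, eCh m k α i * (ccy α ⬝ᵥ y) := by
    intro y i
    rw [mulVec, dotProduct]
    simp only [transpose_apply, cycProj, Matrix.sum_apply, vecMulVec_apply, Finset.sum_mul]
    rw [Finset.sum_comm]
    refine Finset.sum_congr rfl fun α _ => ?_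
    rw [dotProduct, Finset.mul_sum]
    exact Finset.sum_congr rfl fun j _ => by ring
  -- expand the eigenvalue equation componentwise
  have heig' : ∀ i, ∑ α, eCh m k α i * (ccy α ⬝ᵥ (cycProj m k ccy *ᵥ w)) = l * w i := by
    intro i
    have := congrFun heig i
    rw [← mulVec_mulVec, hPT] at this
    simpa using this
  -- the cochord block of w vanishes
  have hl0 : l ≠ 0 := by linarith
  have hwl : ∀ μ : Fin m, w (Sum.inl μ) = 0 := by
    intro μ
    have h := heig' (Sum.inl μ)
    have hz : ∀ α : Fin k, eCh m k α (Sum.inl μ) = 0 := by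
      intro α; simp [eCh, Pi.single_apply]
    rw [Finset.sum_eq_zero (fun α _ => by rw [hz α, zero_mul])] at h
    field_simp at h
    exact (mul_eq_zero.mp h.symm).resolve_left hl0
  -- K u = l u
  have hKu : ∀ β : Fin k, ccy β ⬝ᵥ (cycProj m k ccy *ᵥ w) = l * u β := by
    intro β
    have h := heig' (Sum.inr β)
    have hz : ∀ α : Fin k, eCh m k α (Sum.inr β) = if α = β then 1 else 0 := by
      intro α; simp [eCh, Pi.single_apply, eq_comm]
    rw [Finset.sum_eq_single β] at h
    · rwa [hz, if_pos rfl, one_mul] at h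
    · intro b _ hb; rw [hz, if_neg hb, zero_mul]
    · simp
  have hdotP : ∀ β : Fin k, ccy β ⬝ᵥ (cycProj m k ccy *ᵥ w) = ∑ α, cycKS m k ccy β α * u α := by
    intro β
    rw [dotProduct]
    have : ∀ i, ccy β i * (cycProj m k ccy *ᵥ w) i = ∑ α, ccy β i * ccy α i * u α := by
      intro i
      rw [hP, Finset.mul_sum]
      exact Finset.sum_congr rfl fun α _ => by ring
    rw [Finset.sum_congr rfl fun i _ => this i, Finset.sum_comm]
    refine Finset.sum_congr rfl fun α _ => ?_
    show _ = (ccy β ⬝ᵥ ccy α) * u α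
    rw [dotProduct, Finset.sum_mul]
  have hKeig : cycKS m k ccy *ᵥ u = l • u := by
    funext β
    show ∑ α, cycKS m k ccy β α * u α = l * u β
    rw [← hdotP, hKu]
  -- u ≠ 0
  have hune : u ≠ 0 := by
    intro h
    apply hw
    funext i
    cases i with
    | inl μ => exact hwl μ
    | inr α => exact congrFun h α
  refine ⟨⟨hune, hKeig⟩, ?_⟩
  -- the cochord block of P w
  set v : Fin m → ℝ := fun μ => (cycProj m k ccy *ᵥ w) (Sum.inl μ) with hv
  have hvμ : ∀ μ, v μ = -∑ α, ω μ α * u α := by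
    intro μ
    rw [hv]
    show (cycProj m k ccy *ᵥ w) (Sum.inl μ) = _
    rw [hP, ← Finset.sum_neg_distrib]
    exact Finset.sum_congr rfl fun α _ => by rw [hccy_inl]; ring
  -- key identity from K u = l u
  have hkey : ∀ α : Fin k, ∑ β, (∑ μ, ω μ α * ω μ β) * u β = (l - 1) * u α := by
    intro α
    have h := congrFun hKeig α
    show _ = _
    have hexp : ∑ β, cycKS m k ccy α β * u β = u α + ∑ β, (∑ μ, ω μ α * ω μ β) * u β := by
      rw [Finset.sum_congr rfl fun β _ => by rw [hK α β]]
      rw [Finset.sum_congr rfl (fun β _ => add_mul _ _ (u β)), Finset.sum_add_distrib]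
      congr 1
      rw [Finset.sum_eq_single α]
      · rw [if_pos rfl, one_mul]
      · intro b _ hb; rw [if_neg (Ne.symm hb), zero_mul]
      · simp
    have h2 : (cycKS m k ccy *ᵥ u) α = ∑ β, cycKS m k ccy α β * u β := rfl
    rw [h2, hexp] at h
    have h3 : (l • u) α = l * u α := rfl
    rw [h3] at h
    linarith
  -- s α := ∑ μ, ω μ α * v μ = -(l-1) u α
  have hs : ∀ α : Fin k, ∑ μ, ω μ α * v μ = -((l - 1) * u α) := by
    intro α
    have e1 : ∑ μ, ω μ α * v μ = ∑ μ, ∑ β, -(ω μ α * ω μ β * u β) := by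
      refine Finset.sum_congr rfl fun μ _ => ?_
      rw [hvμ μ, mul_neg, Finset.mul_sum, ← Finset.sum_neg_distrib]
      exact Finset.sum_congr rfl fun β _ => by ring
    have e2 : ∀ β : Fin k, ∑ μ, -(ω μ α * ω μ β * u β)
        = -((∑ μ, ω μ α * ω μ β) * u β) := by
      intro β
      rw [Finset.sum_neg_distrib, Finset.sum_mul]
    rw [e1, Finset.sum_comm, Finset.sum_congr rfl fun β _ => e2 β,
      Finset.sum_neg_distrib, hkey α]
  -- *K v = l v
  have hKSv : cocKS m k cco *ᵥ v = l • v := by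
    funext μ
    show ∑ μ', cocKS m k cco μ μ' * v μ' = l * v μ
    rw [Finset.sum_congr rfl fun μ' _ => by rw [hKS μ μ']]
    rw [Finset.sum_congr rfl (fun μ' _ => add_mul _ _ (v μ')), Finset.sum_add_distrib]
    have h1 : ∑ μ', (if μ = μ' then (1:ℝ) else 0) * v μ' = v μ := by
      rw [Finset.sum_eq_single μ]
      · rw [if_pos rfl, one_mul]
      · intro b _ hb; rw [if_neg (Ne.symm hb), zero_mul]
      · simp
    have h2 : ∑ μ', (∑ α, ω μ α * ω μ' α) * v μ' = (l - 1) * v μ := by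
      calc ∑ μ', (∑ α, ω μ α * ω μ' α) * v μ'
          = ∑ μ', ∑ α, ω μ α * (ω μ' α * v μ') := by
            refine Finset.sum_congr rfl fun μ' _ => ?_
            rw [Finset.sum_mul]
            exact Finset.sum_congr rfl fun α _ => by ring
        _ = ∑ α, ω μ α * ∑ μ', ω μ' α * v μ' := by
            rw [Finset.sum_comm]
            exact Finset.sum_congr rfl fun α _ => by rw [Finset.mul_sum]
        _ = ∑ α, ω μ α * (-((l - 1) * u α)) :=
            Finset.sum_congr rfl fun α _ => by rw [hs α]
        _ = (l - 1) * v μ := by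
            rw [hvμ μ, mul_neg, Finset.mul_sum, ← Finset.sum_neg_distrib]
            exact Finset.sum_congr rfl fun α _ => by ring
    rw [h1, h2]; ring
  refine ⟨?_, hKSv⟩
  -- v ≠ 0
  intro hz
  have : ∀ α, u α = 0 := by
    intro α
    have h := hs α
    rw [Finset.sum_eq_zero (fun μ _ => by rw [show v μ = 0 from congrFun hz μ, mul_zero])] at h
    have hl1 : l - 1 ≠ 0 := by linarith
    have h' : (l - 1) * u α = 0 := by linarith
    exact (mul_eq_zero.mp h').resolve_left hl1
  exact hune (funext this)
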